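/- arXiv:1104.1201 — 3 statements merged into one kernel-verified Lean document; each statement's English description precedes it below -/
import Mathlib

section
/- A function f : ℝ → ℂ taking values in the unit circle S¹ is a Lebesgue-measurable homomorphism (f(x+y) = f(x)·f(y) for all x, y ∈ ℝ) if and only if there exists a real number α ∈ ℝ such that f(x) = e^{i α x} for every x ∈ ℝ. -/
open MeasureTheory Real

theorem circle_valued_measurable_character_iff
    (f : ℝ → ℂ)
    (hcirc : ∀ x : ℝ, ‖f x‖ = 1) :
    (Measurable f ∧ ∀ x y : ℝ, f (x + y) = f x * f y) ↔
      ∃ α : ℝ, ∀ x : ℝ, f x = Complex.exp (Complex.I * α * x) := by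
  constructor
  · rintro ⟨hmeas, hmul⟩
    have hne : ∀ x, f x ≠ 0 := by
      intro x h
      have := hcirc x
      rw [h] at this
      simp at this
    have hf0 : f 0 = 1 := by
      have h : f 0 = f 0 * f 0 := by simpa using hmul 0 0
      have h' : f 0 * 1 = f 0 * f 0 := by rw [mul_one]; exact h
      exact (mul_left_cancel₀ (hne 0) h').symm
    have hbd : ∀ x, ‖f x‖ ≤ 1 := fun x => le_of_eq (hcirc x)
    -- interval integrability
    have hint : ∀ a b : ℝ, IntervalIntegrable f volume a b := by
      intro a b
      rw [intervalIntegrable_iff]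
      exact Measure.integrableOn_of_bounded measure_Ioc_lt_top.ne
        hmeas.aestronglyMeasurable (ae_of_all _ hbd)
    have hloc : LocallyIntegrable f volume := by
      intro x
      refine ⟨Metric.closedBall x 1, Metric.closedBall_mem_nhds x one_pos, ?_⟩
      exact Measure.integrableOn_of_bounded (measure_closedBall_lt_top).ne
        hmeas.aestronglyMeasurable (ae_of_all _ hbd)
    -- key translation identity
    have key : ∀ x a : ℝ, (∫ t in x..(x + a), f t) = f x * ∫ t in (0:ℝ)..a, f t := by
      intro x a
      have h1 : (∫ t in (0:ℝ)..a, f (t + x)) = ∫ t in (0 + x)..(a + x), f t :=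
        intervalIntegral.integral_comp_add_right f x
      rw [zero_add] at h1
      calc (∫ t in x..(x + a), f t) = ∫ t in x..(a + x), f t := by rw [add_comm x a]
        _ = ∫ t in (0:ℝ)..a, f (t + x) := h1.symm
        _ = ∫ t in (0:ℝ)..a, f x * f t := by
            apply intervalIntegral.integral_congr
            intro t _
            show f (t + x) = f x * f t
            rw [add_comm, hmul]
        _ = f x * ∫ t in (0:ℝ)..a, f t := intervalIntegral.integral_const_mul _ _
    -- there is a > 0 with nonzero integral
    obtain ⟨a, ha, hc⟩ : ∃ a : ℝ, 0 < a ∧ (∫ t in (0:ℝ)..a, f t) ≠ 0 := by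
      have hae := IsUnifLocDoublingMeasure.ae_tendsto_average (μ := volume) hloc 1
      obtain ⟨x, hx⟩ := hae.exists
      have hev : ∀ᶠ j in nhdsWithin (0:ℝ) (Set.Ioi 0),
          x ∈ Metric.closedBall ((fun _ : ℝ => x) j) (1 * id j) := by
        filter_upwards [self_mem_nhdsWithin] with j (hj : j ∈ Set.Ioi 0)
        exact Metric.mem_closedBall_self (by simpa using hj.le)
      have htend := hx (fun _ : ℝ => x) id Filter.tendsto_id hev
      have hev2 := (htend.eventually_ne (hne x)).and self_mem_nhdsWithin
      obtain ⟨r, havg, hr⟩ := hev2.exists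
      have hr' : (0:ℝ) < r := hr
      have hI : (∫ y in Metric.closedBall x r, f y) ≠ 0 := by
        intro h
        apply havg
        simp only [id]
        rw [setAverage_eq, h, smul_zero]
      have hIcc : Metric.closedBall x r = Set.Icc (x - r) (x + r) := Real.closedBall_eq_Icc
      have hle : x - r ≤ x + r := by linarith
      have h2 : (∫ t in (x - r)..(x + r), f t) ≠ 0 := by
        rw [intervalIntegral.integral_of_le hle, ← integral_Icc_eq_integral_Ioc, ← hIcc]
        exact hI
      have h3 : x + r = (x - r) + 2 * r := by ring
      rw [h3, key (x - r) (2 * r)] at h2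
      exact ⟨2 * r, by linarith, fun h => h2 (by rw [h, mul_zero])⟩
    set c : ℂ := ∫ t in (0:ℝ)..a, f t with hcdef
    set G : ℝ → ℂ := fun y => ∫ t in (0:ℝ)..y, f t with hGdef
    have hGcont : Continuous G := intervalIntegral.continuous_primitive hint 0
    have hrepr : ∀ x : ℝ, f x = c⁻¹ * (G (x + a) - G x) := by
      intro x
      have : G (x + a) - G x = ∫ t in x..(x + a), f t :=
        intervalIntegral.integral_interval_sub_left (hint 0 (x + a)) (hint 0 x)
      rw [this, key x a, ← hcdef, mul_comm (f x) c, ← mul_assoc, inv_mul_cancel₀ hc, one_mul]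
    have hcont : Continuous f := by
      have : Continuous fun x => c⁻¹ * (G (x + a) - G x) :=
        continuous_const.mul ((hGcont.comp (continuous_id.add continuous_const)).sub hGcont)
      exact this.congr fun x => (hrepr x).symm
    -- differentiability
    have hG' : ∀ y : ℝ, HasDerivAt G (f y) y := fun y =>
      intervalIntegral.integral_hasDerivAt_right (hint 0 y)
        hcont.stronglyMeasurable.stronglyMeasurableAtFilter hcont.continuousAt
    set β : ℂ := c⁻¹ * (f a - 1) with hβdef
    have hf' : ∀ x : ℝ, HasDerivAt f (β * f x) x := by
      intro x
      have h1 : HasDerivAt (fun x : ℝ => G (x + a)) (f (x + a)) x :=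
        (hG' (x + a)).comp_add_const x a
      have h2 : HasDerivAt (fun x : ℝ => c⁻¹ * (G (x + a) - G x))
          (c⁻¹ * (f (x + a) - f x)) x := (h1.sub (hG' x)).const_mul c⁻¹
      have h3 : HasDerivAt f (c⁻¹ * (f (x + a) - f x)) x := by
        apply h2.congr_of_eventuallyEq
        exact Filter.Eventually.of_forall hrepr
      have h4 : c⁻¹ * (f (x + a) - f x) = β * f x := by
        rw [hmul x a, hβdef]; ring
      rwa [h4] at h3
    -- solve the ODE: f x = exp (β x)
    have hsol : ∀ x : ℝ, f x = Complex.exp (β * x) := by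
      set g : ℝ → ℂ := fun x => f x * Complex.exp (-(β * x)) with hgdef
      have hg' : ∀ x : ℝ, HasDerivAt g 0 x := by
        intro x
        have hre : HasDerivAt (fun x : ℝ => (x : ℂ)) 1 x := by
          have h0 := Complex.ofRealCLM.hasDerivAt (x := x)
          simp at h0
          exact h0
        have hin : HasDerivAt (fun x : ℝ => -(β * (x : ℂ))) (-(β * 1)) x :=
          (hre.const_mul β).neg
        have hexp : HasDerivAt (fun x : ℝ => Complex.exp (-(β * (x : ℂ))))
            (Complex.exp (-(β * (x : ℂ))) * -(β * 1)) x := hin.cexp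
        have := (hf' x).mul hexp
        convert this using 1
        · rfl
        · rfl
        · ring
      have hconst : ∀ x : ℝ, f x * Complex.exp (-(β * x)) = 1 := by
        intro x
        have h := is_const_of_deriv_eq_zero (f := g) (fun y => (hg' y).differentiableAt)
          (fun y => (hg' y).deriv) x 0
        simpa [hgdef, hf0] using h
      intro x
      have hx := hconst x
      have : f x * Complex.exp (-(β * x)) * Complex.exp (β * x) =
          Complex.exp (β * x) := by rw [hx, one_mul]
      rwa [mul_assoc, ← Complex.exp_add, neg_add_cancel, Complex.exp_zero, mul_one] at this
    -- β is purely imaginary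
    have hβre : β.re = 0 := by
      have h1 := hcirc 1
      rw [hsol 1, Complex.norm_exp] at h1
      have h2 : (β * ((1:ℝ):ℂ)).re = 0 := Real.exp_injective (by rw [h1, Real.exp_zero])
      simpa using h2
    refine ⟨β.im, fun x => ?_⟩
    have hβ : (β : ℂ) = Complex.I * (β.im : ℝ) := by
      apply Complex.ext <;> simp [hβre]
    have hIx : Complex.I * ((β.im : ℝ) : ℂ) * (x : ℂ) = β * x := by rw [← hβ]
    rw [hsol x, hIx]
  · rintro ⟨α, hα⟩
    have hfeq : f = fun x : ℝ => Complex.exp (Complex.I * α * x) := funext hα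
    constructor
    · have : Continuous fun x : ℝ => Complex.exp (Complex.I * α * x) := by
        apply Complex.continuous_exp.comp
        exact continuous_const.mul Complex.continuous_ofReal
      rw [hfeq]; exact this.measurable
    · intro x y
      rw [hα, hα, hα, ← Complex.exp_add]
      congr 1
      push_cast
      ring
end

section
/- Let n be a positive natural number. A function f : ℝⁿ → ℂ taking values in the unit circle S¹ is a Lebesgue-measurable homomorphism (f(x+y) = f(x)·f(y) for all x, y ∈ ℝⁿ) if and only if there exists α ∈ ℝⁿ such that f(x) = e^{i ⟨α, x⟩} for every x ∈ ℝⁿ, where ⟨α, x⟩ = α₁x₁ + ⋯ + αₙxₙ. -/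
open MeasureTheory Real intervalIntegral

lemma measurable_char_1d (g : ℝ → ℂ) (hm : Measurable g)
    (hnorm : ∀ t, ‖g t‖ = 1)
    (hadd : ∀ s t, g (s + t) = g s * g t) :
    ∃ α : ℝ, ∀ t, g t = Complex.exp (Complex.I * ((α * t : ℝ) : ℂ)) := by
  have hn : ∀ t, ‖g t‖ = 1 := fun t => by exact hnorm t
  have hg0 : g 0 = 1 := by
    have h0 : g 0 * g 0 = g 0 * 1 := by rw [← hadd 0 0, add_zero, mul_one]
    have hne : g 0 ≠ 0 := by
      intro h
      have h1 := hn 0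
      rw [h] at h1
      simp at h1
    exact (mul_left_cancel₀ hne h0)
  have hloc : LocallyIntegrable g volume :=
    (memLp_top_of_bound hm.aestronglyMeasurable 1
      (Filter.Eventually.of_forall fun t => (hn t).le)).locallyIntegrable le_top
  have hII : ∀ a b : ℝ, IntervalIntegrable g volume a b := fun a b =>
    (intervalIntegrable_iff).mpr
      ((hloc.integrableOn_isCompact isCompact_uIcc).mono_set Set.Ioc_subset_Icc_self)
  -- existence of a with nonzero integral
  have hne : ∃ a : ℝ, (∫ t in (0:ℝ)..a, g t) ≠ 0 := by
    by_contra h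
    push_neg at h
    have hall : ∀ u v : ℝ, (∫ t in u..v, g t) = 0 := by
      intro u v
      have h2 := integral_add_adjacent_intervals (hII 0 u) (hII u v)
      rw [h u, h v] at h2
      simpa using h2
    have hae := IsUnifLocDoublingMeasure.ae_tendsto_average (μ := volume) hloc 1
    obtain ⟨x, hx⟩ := hae.exists
    have δlim : Filter.Tendsto (fun j : ℕ => (1:ℝ) / (j + 1)) Filter.atTop (nhdsWithin 0 (Set.Ioi 0)) := by
      apply tendsto_nhdsWithin_of_tendsto_nhds_of_eventually_within
      · exact tendsto_one_div_add_atTop_nhds_zero_nat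
      · exact Filter.Eventually.of_forall fun j => Set.mem_Ioi.mpr (by positivity)
    have hmem : ∀ᶠ j : ℕ in Filter.atTop, x ∈ Metric.closedBall x (1 * ((1:ℝ) / (j + 1))) := by
      refine Filter.Eventually.of_forall fun j => ?_
      simp only [Metric.mem_closedBall, dist_self, one_mul]
      positivity
    have htend := hx (fun _ : ℕ => x) (fun j : ℕ => (1:ℝ) / (j + 1)) δlim hmem
    have hzero : ∀ j : ℕ, (⨍ y in Metric.closedBall x ((1:ℝ) / (j + 1)), g y) = 0 := by
      intro j
      have hr : (0:ℝ) ≤ 1 / (j + 1) := by positivity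
      rw [setAverage_eq, Real.closedBall_eq_Icc, integral_Icc_eq_integral_Ioc,
        ← intervalIntegral.integral_of_le (by linarith), hall]
      simp
    rw [Filter.tendsto_congr hzero] at htend
    have hgx : g x = 0 := tendsto_nhds_unique htend tendsto_const_nhds |>.symm.symm
    have h1 := hn x
    rw [hgx] at h1
    simp at h1
  obtain ⟨a, hc⟩ := hne
  set c : ℂ := ∫ t in (0:ℝ)..a, g t with hcdef
  set F : ℝ → ℂ := fun y => ∫ t in (0:ℝ)..y, g t with hFdef
  have hFsplit : ∀ x : ℝ, (∫ t in x..(x + a), g t) = F (x + a) - F x := by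
    intro x
    have := integral_add_adjacent_intervals (hII 0 x) (hII x (x + a))
    simp only [hFdef]
    linear_combination this
  have key : ∀ x : ℝ, g x * c = F (x + a) - F x := by
    intro x
    have h1 : (∫ t in (0:ℝ)..a, g (x + t)) = ∫ t in x..(x + a), g t := by
      simpa using integral_comp_add_left (a := (0:ℝ)) (b := a) g x
    have h2 : (∫ t in (0:ℝ)..a, g (x + t)) = g x * c := by
      simp_rw [hadd]
      exact integral_const_mul _ _
    rw [← hFsplit, ← h1, h2]
  have hF : Continuous F := intervalIntegral.continuous_primitive hII 0
  have hgc : Continuous g := by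
    have hgeq : g = fun x => (F (x + a) - F x) * c⁻¹ := by
      funext x
      rw [← key x, mul_assoc, mul_inv_cancel₀ hc, mul_one]
    rw [hgeq]
    exact ((hF.comp (continuous_id.add continuous_const)).sub hF).mul continuous_const
  -- differentiability
  have hFder : ∀ y : ℝ, HasDerivAt F (g y) y := by
    intro y
    exact integral_hasDerivAt_right (hII 0 y)
      (hgc.stronglyMeasurable.stronglyMeasurableAtFilter) hgc.continuousAt
  set k : ℂ := (g a - 1) * c⁻¹ with hkdef
  have hder : ∀ x : ℝ, HasDerivAt g (k * g x) x := by
    intro x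
    have h1 : HasDerivAt (fun x : ℝ => F (x + a)) (g (x + a)) x :=
      HasDerivAt.comp_add_const x a (hFder (x + a))
    have h2 : HasDerivAt (fun x : ℝ => (F (x + a) - F x) * c⁻¹)
        ((g (x + a) - g x) * c⁻¹) x := (h1.sub (hFder x)).mul_const c⁻¹
    have hgeq : g = fun x => (F (x + a) - F x) * c⁻¹ := by
      funext x
      rw [← key x, mul_assoc, mul_inv_cancel₀ hc, mul_one]
    have h3 : HasDerivAt g ((g (x + a) - g x) * c⁻¹) x :=
      h2.congr_of_eventuallyEq (Filter.Eventually.of_forall fun y => by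
        show g y = (F (y + a) - F y) * c⁻¹
        rw [← key y, mul_assoc, mul_inv_cancel₀ hc, mul_one])
    have : (g (x + a) - g x) * c⁻¹ = k * g x := by
      rw [hadd x a, hkdef]; ring
    rwa [this] at h3
  -- solve the ODE
  have hsol : ∀ x : ℝ, g x = Complex.exp (k * x) := by
    have hd : ∀ x : ℝ, HasDerivAt (fun x : ℝ => g x * Complex.exp (-(k * x))) 0 x := by
      intro x
      have hinner : HasDerivAt (fun x : ℝ => -(k * (x : ℂ))) (-k) x := by
        have h1 : HasDerivAt (fun x : ℝ => (x : ℂ)) 1 x := by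
          exact Complex.ofRealCLM.hasDerivAt (x := x)
        have h2 := (h1.const_mul k).neg
        rw [mul_one] at h2
        exact h2
      have he : HasDerivAt (fun x : ℝ => Complex.exp (-(k * x)))
          (Complex.exp (-(k * x)) * (-k)) x := hinner.cexp
      have := (hder x).mul he
      rw [show k * g x * Complex.exp (-(k * x)) + g x * (Complex.exp (-(k * x)) * -k) = 0 by ring] at this
      exact this
    intro x
    have hdiff : Differentiable ℝ (fun x : ℝ => g x * Complex.exp (-(k * x))) :=
      fun x => (hd x).differentiableAt
    have hconst := is_const_of_deriv_eq_zero hdiff (fun x => (hd x).deriv) x 0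
    simp only [Complex.ofReal_zero, mul_zero, neg_zero, Complex.exp_zero, mul_one, hg0] at hconst
    rw [Complex.exp_neg] at hconst
    exact (mul_inv_eq_one₀ (Complex.exp_ne_zero _)).mp hconst
  -- k is purely imaginary
  have hre : k.re = 0 := by
    have h1 : Real.exp ((k * (1:ℝ)).re) = 1 := by
      rw [← Complex.norm_exp, ← hsol 1]
      exact hnorm 1
    rw [← Real.exp_zero] at h1
    have h2 := Real.exp_eq_exp.mp h1
    simpa using h2
  refine ⟨k.im, fun t => ?_⟩
  rw [hsol t]
  congr 1
  rw [show (Complex.I * ((k.im * t : ℝ) : ℂ)) = (Complex.I * k.im) * t by push_cast; ring]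
  congr 2
  apply Complex.ext <;> simp [hre]

theorem multidim_circle_valued_measurable_character_iff
    (n : ℕ) (hn : 0 < n)
    (f : (Fin n → ℝ) → ℂ)
    (hcirc : ∀ x : Fin n → ℝ, ‖f x‖ = 1) :
    (Measurable f ∧ ∀ x y : Fin n → ℝ, f (x + y) = f x * f y) ↔
      ∃ α : Fin n → ℝ, ∀ x : Fin n → ℝ,
        f x = Complex.exp (Complex.I * (∑ j, α j * x j : ℝ)) := by
  constructor
  · rintro ⟨hm, hadd⟩
    have hf0 : f 0 = 1 := by
      have h0 : f 0 * f 0 = f 0 * 1 := by rw [← hadd 0 0, add_zero, mul_one]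
      have hne : f 0 ≠ 0 := by
        intro h
        have h1 := hcirc 0
        rw [h] at h1
        simp at h1
      exact mul_left_cancel₀ hne h0
    -- coordinate characters
    have hsingle : ∀ j : Fin n, Measurable fun t : ℝ => (Pi.single j t : Fin n → ℝ) := by
      intro j
      apply measurable_pi_lambda
      intro i
      by_cases h : i = j
      · subst h; simpa using measurable_id'
      · simp only [Pi.single_apply, if_neg h]
        exact measurable_const
    have hchar : ∀ j : Fin n, ∃ α : ℝ, ∀ t : ℝ,
        f (Pi.single j t) = Complex.exp (Complex.I * ((α * t : ℝ) : ℂ)) := by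
      intro j
      apply measurable_char_1d (fun t => f (Pi.single j t)) (hm.comp (hsingle j))
        (fun t => hcirc _)
      intro s t
      rw [← hadd]
      congr 1
      simp [Pi.single_add]
    choose α hα using hchar
    refine ⟨α, fun x => ?_⟩
    have hprod : ∀ (s : Finset (Fin n)) (v : Fin n → (Fin n → ℝ)),
        f (∑ j ∈ s, v j) = ∏ j ∈ s, f (v j) := by
      intro s v
      induction s using Finset.induction_on with
      | empty => simpa using hf0
      | @insert j s hj ih => rw [Finset.sum_insert hj, Finset.prod_insert hj, hadd, ih]
    have hx : x = ∑ j, Pi.single j (x j) := (Finset.univ_sum_single x).symm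
    calc f x = ∏ j, f (Pi.single j (x j)) := by rw [hx, hprod]; rw [← hx]
      _ = ∏ j, Complex.exp (Complex.I * ((α j * x j : ℝ) : ℂ)) := by
          exact Finset.prod_congr rfl fun j _ => hα j (x j)
      _ = Complex.exp (∑ j, Complex.I * ((α j * x j : ℝ) : ℂ)) := (Complex.exp_sum _ _).symm
      _ = Complex.exp (Complex.I * (∑ j, α j * x j : ℝ)) := by
          congr 1
          rw [← Finset.mul_sum]
          push_cast
          ring
  · rintro ⟨α, hα⟩
    constructor
    · have hcont : Continuous f := by
        have : f = fun x => Complex.exp (Complex.I * ((∑ j, α j * x j : ℝ) : ℂ)) :=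
          funext hα
        rw [this]
        apply Complex.continuous_exp.comp
        apply continuous_const.mul
        apply Complex.continuous_ofReal.comp
        exact continuous_finset_sum _ fun j _ => continuous_const.mul (continuous_apply j)
      exact hcont.measurable
    · intro x y
      rw [hα, hα, hα, ← Complex.exp_add]
      congr 1
      have hsum : (∑ j, α j * (x + y) j) = (∑ j, α j * x j) + ∑ j, α j * y j := by
        rw [← Finset.sum_add_distrib]
        exact Finset.sum_congr rfl fun j _ => by simp [Pi.add_apply]; ring
      rw [hsum]
      push_cast
      ring
end

section
/- Every Lebesgue-measurable homomorphism f : ℝ → ℂ with values in the unit circle S¹ (f(x+y) = f(x)·f(y) and |f(x)| = 1 for all x, y ∈ ℝ) is continuous. -/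
open MeasureTheory Real

theorem measurable_character_continuous
    (f : ℝ → ℂ) (hmeas : Measurable f)
    (hcirc : ∀ x : ℝ, ‖f x‖ = 1)
    (hhom : ∀ x y : ℝ, f (x + y) = f x * f y) :
    Continuous f := by
  have hne : ∀ x, f x ≠ 0 := by
    intro x hx
    have := hcirc x
    rw [hx] at this
    simp at this
  -- local integrability
  have hloc : LocallyIntegrable f volume := by
    rw [locallyIntegrable_iff]
    intro K hK
    refine Measure.integrableOn_of_bounded (M := 1) hK.measure_lt_top.ne
      hmeas.aestronglyMeasurable ?_
    filter_upwards with x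
    rw [hcirc x]
  have hII : ∀ a b : ℝ, IntervalIntegrable f volume a b := fun a b =>
    (hloc.integrableOn_isCompact isCompact_uIcc).intervalIntegrable
  -- Lebesgue point
  obtain ⟨x, hx⟩ := (IsUnifLocDoublingMeasure.ae_tendsto_average
    (μ := volume) hloc 1).exists
  have hδ : Filter.Tendsto (fun n : ℕ => (1 : ℝ) / (n + 1)) Filter.atTop (nhdsWithin 0 (Set.Ioi 0)) := by
    apply tendsto_nhdsWithin_of_tendsto_nhds_of_eventually_within
    · exact tendsto_one_div_add_atTop_nhds_zero_nat
    · filter_upwards with n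
      simp only [Set.mem_Ioi]
      positivity
  have hmem : ∀ᶠ n : ℕ in Filter.atTop, x ∈ Metric.closedBall x (1 * (1 / (n + 1) : ℝ)) := by
    filter_upwards with n
    simp only [Metric.mem_closedBall, dist_self, one_mul]
    positivity
  have havg := hx (fun _ : ℕ => x) (fun n : ℕ => 1 / (n + 1)) hδ hmem
  obtain ⟨n, hn⟩ := (havg.eventually_ne (hne x)).exists
  beta_reduce at hn
  set r : ℝ := 1 / (n + 1) with hr
  have hrpos : (0 : ℝ) < r := by positivity
  set c : ℂ := ∫ t in Metric.closedBall x r, f t with hc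
  have hcne : c ≠ 0 := by
    intro h0
    apply hn
    rw [setAverage_eq, ← hc, h0, smul_zero]
  -- translation identity
  have key : ∀ y : ℝ, f y * c = ∫ s in Metric.closedBall (y + x) r, f s := by
    intro y
    have hpre : (fun t => y + t) ⁻¹' Metric.closedBall (y + x) r = Metric.closedBall x r := by
      ext t
      simp [Metric.mem_closedBall, dist_add_left]
    rw [← (measurePreserving_add_left volume y).setIntegral_preimage_emb
      (measurableEmbedding_addLeft y), hpre]
    simp only [hhom y]
    rw [MeasureTheory.integral_const_mul]
  -- continuity of primitive
  set g : ℝ → ℂ := fun b => ∫ t in (0:ℝ)..b, f t with hg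
  have hgcont : Continuous g := intervalIntegral.continuous_primitive hII 0
  have hcb : ∀ y : ℝ, (∫ s in Metric.closedBall (y + x) r, f s) =
      g (y + x + r) - g (y + x - r) := by
    intro y
    rw [Real.closedBall_eq_Icc, MeasureTheory.integral_Icc_eq_integral_Ioc,
      ← intervalIntegral.integral_of_le (by linarith),
      ← intervalIntegral.integral_interval_sub_left (hII 0 (y + x + r)) (hII 0 (y + x - r))]
  have hfy : ∀ y : ℝ, f y = (g (y + x + r) - g (y + x - r)) * c⁻¹ := by
    intro y
    rw [← hcb y, ← key y, mul_assoc, mul_inv_cancel₀ hcne, mul_one]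
  have : Continuous fun y => (g (y + x + r) - g (y + x - r)) * c⁻¹ := by
    apply Continuous.mul _ continuous_const
    exact (hgcont.comp ((continuous_id.add continuous_const).add continuous_const)).sub
      (hgcont.comp ((continuous_id.add continuous_const).sub continuous_const))
  exact this.congr fun y => (hfy y).symm
end
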